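/- arXiv:1806.05369 — 4 statements merged into one kernel-verified Lean document; each statement's English description precedes it below -/
import Mathlib

section
/- Let N₀ > 1 be sufficiently large. For every fixed N ≥ N₀ there exists a constant C > 0, depending only on ρ₀ := inf_{[0,T]} ρ, T and N, such that for every s ∈ ℂ with Re s ≤ 0, Im s ≥ 0 and N·Im s + Re s ≤ 0, one has |∫₀ᵀ ρ(t) e^{-st} dt| ≥ C ∫₀ᵀ e^{-t·Re s} dt. -/
lemma one_sub_le_cos' {x : ℝ} (hx : 0 ≤ x) : 1 - x ≤ Real.cos x := by
  rcases le_or_gt x 2 with h | h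
  · nlinarith [Real.one_sub_sq_div_two_le_cos (x := x)]
  · nlinarith [Real.neg_one_le_cos x]

/-- Let `N₀ > 1` be sufficiently large. For every fixed `N ≥ N₀` there exists
`C > 0` (depending only on `ρ₀ := inf_[0,T] ρ`, `T` and `N`) such that for every `s ∈ ℂ` with
`Re s ≤ 0`, `Im s ≥ 0` and `N·Im s + Re s ≤ 0`, one has
`|∫₀ᵀ ρ(t) e^{-st} dt| ≥ C ∫₀ᵀ e^{-t·Re s} dt`. -/
theorem stmt0 (T : ℝ) (hT : 0 < T) (ρ ρ' : ℝ → ℝ)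
    (hρ : ∀ t ∈ Set.Icc 0 T, HasDerivAt ρ (ρ' t) t)
    (hρ' : ContinuousOn ρ' (Set.Icc 0 T))
    (hpos : ∀ t ∈ Set.Icc 0 T, 0 < ρ t) :
    ∃ N₀ : ℝ, 1 < N₀ ∧ ∀ N ≥ N₀, ∃ C > 0, ∀ s : ℂ,
      s.re ≤ 0 → 0 ≤ s.im → N * s.im + s.re ≤ 0 →
      C * ∫ t in (0:ℝ)..T, Real.exp (-t * s.re) ≤
        ‖∫ t in (0:ℝ)..T, (ρ t : ℂ) * Complex.exp (-s * t)‖ := by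
  have hρc : ContinuousOn ρ (Set.Icc 0 T) := fun t ht =>
    (hρ t ht).continuousAt.continuousWithinAt
  have hne : (Set.Icc (0:ℝ) T).Nonempty := ⟨0, le_refl 0, hT.le⟩
  obtain ⟨t₀, ht₀, hmin⟩ := isCompact_Icc.exists_isMinOn hne hρc
  obtain ⟨t₁, ht₁, hmax⟩ := isCompact_Icc.exists_isMaxOn hne hρc
  set ρ₀ := ρ t₀ with hρ₀def
  set M := ρ t₁ with hMdef
  have hρ₀ : 0 < ρ₀ := hpos t₀ ht₀
  have hMpos : 0 < M := hpos t₁ ht₁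
  refine ⟨max 2 (8 * M / ρ₀), lt_of_lt_of_le one_lt_two (le_max_left _ _), ?_⟩
  intro N hN
  have hN2 : (2:ℝ) ≤ N := le_trans (le_max_left _ _) hN
  have hNM : 8 * M / ρ₀ ≤ N := le_trans (le_max_right _ _) hN
  have hN0 : (0:ℝ) < N := by linarith
  refine ⟨ρ₀ / 2, by positivity, ?_⟩
  intro s hre him hcomb
  set σ := -s.re with hσdef
  set ω := s.im with hωdef
  have hσ0 : 0 ≤ σ := by simp only [hσdef]; linarith
  have hNω : N * ω ≤ σ := by simp only [hσdef, hωdef]; linarith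
  -- notation for the real integrands
  set f : ℝ → ℝ := fun t => Real.exp (σ * t) with hfdef
  set g : ℝ → ℝ := fun t => ρ t * (Real.exp (σ * t) * Real.cos (ω * (T - t))) with hgdef
  set h : ℝ → ℝ := fun t => ρ₀ * Real.exp (σ * t) - 2 * M / N * Real.exp (σ * (T + t) / 2)
    with hhdef
  -- integrability
  have hcf : Continuous f := by fun_prop
  have hintf : IntervalIntegrable f MeasureTheory.volume 0 T := hcf.intervalIntegrable 0 T
  have hcK : Continuous (fun t => Real.exp (σ * (T + t) / 2)) := by fun_prop
  have hintK : IntervalIntegrable (fun t => Real.exp (σ * (T + t) / 2))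
      MeasureTheory.volume 0 T := hcK.intervalIntegrable 0 T
  have hinth : IntervalIntegrable h MeasureTheory.volume 0 T :=
    ((hintf.const_mul ρ₀).sub (hintK.const_mul (2 * M / N)))
  have hintg : IntervalIntegrable g MeasureTheory.volume 0 T := by
    apply ContinuousOn.intervalIntegrable
    rw [Set.uIcc_of_le hT.le]
    exact hρc.mul (Continuous.continuousOn (by fun_prop))
  -- pointwise lower bound
  have hpt : ∀ t ∈ Set.Icc (0:ℝ) T, h t ≤ g t := by
    intro t ht
    have hTt : 0 ≤ T - t := by linarith [ht.2]
    have hx : 0 ≤ ω * (T - t) := mul_nonneg him hTt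
    have hcos : 1 - ω * (T - t) ≤ Real.cos (ω * (T - t)) := one_sub_le_cos' hx
    have hρt : 0 < ρ t := hpos t ht
    have hρge : ρ₀ ≤ ρ t := hmin ht
    have hρle : ρ t ≤ M := hmax ht
    have hexp : 0 < Real.exp (σ * t) := Real.exp_pos _
    -- σ (T - t) ≤ 2 exp(σ (T - t)/2)
    have hb1 : σ * (T - t) ≤ 2 * Real.exp (σ * (T - t) / 2) := by
      have h := Real.add_one_le_exp (σ * (T - t) / 2)
      have h2 : 0 < Real.exp (σ * (T - t) / 2) := Real.exp_pos _
      nlinarith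
    have hmulexp : Real.exp (σ * (T - t) / 2) * Real.exp (σ * t)
        = Real.exp (σ * (T + t) / 2) := by
      rw [← Real.exp_add]; ring_nf
    -- N * (ω (T-t)) ≤ σ (T - t)
    have hx2 : N * (ω * (T - t)) ≤ σ * (T - t) := by
      have := mul_le_mul_of_nonneg_right hNω hTt
      nlinarith
    -- key: M * exp(σt) * (ω(T-t)) ≤ (2M/N) exp(σ(T+t)/2)
    have hkey : M * (Real.exp (σ * t) * (ω * (T - t)))
        ≤ 2 * M / N * Real.exp (σ * (T + t) / 2) := by
      have h1 : N * (ω * (T - t)) ≤ 2 * Real.exp (σ * (T - t) / 2) := le_trans hx2 hb1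
      have h2 : ω * (T - t) ≤ 2 * Real.exp (σ * (T - t) / 2) / N := by
        rw [le_div_iff₀ hN0]; nlinarith
      have h3 : M * (Real.exp (σ * t) * (ω * (T - t)))
          ≤ M * (Real.exp (σ * t) * (2 * Real.exp (σ * (T - t) / 2) / N)) := by
        apply mul_le_mul_of_nonneg_left _ hMpos.le
        exact mul_le_mul_of_nonneg_left h2 hexp.le
      calc M * (Real.exp (σ * t) * (ω * (T - t)))
          ≤ M * (Real.exp (σ * t) * (2 * Real.exp (σ * (T - t) / 2) / N)) := h3
        _ = 2 * M / N * (Real.exp (σ * (T - t) / 2) * Real.exp (σ * t)) := by ring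
        _ = 2 * M / N * Real.exp (σ * (T + t) / 2) := by rw [hmulexp]
    have step1 : ρ t * (Real.exp (σ * t) * (1 - ω * (T - t)))
        ≤ ρ t * (Real.exp (σ * t) * Real.cos (ω * (T - t))) := by
      apply mul_le_mul_of_nonneg_left _ hρt.le
      exact mul_le_mul_of_nonneg_left hcos hexp.le
    have step2 : ρ₀ * Real.exp (σ * t) - M * (Real.exp (σ * t) * (ω * (T - t)))
        ≤ ρ t * (Real.exp (σ * t) * (1 - ω * (T - t))) := by
      have e1 : ρ₀ * Real.exp (σ * t) ≤ ρ t * Real.exp (σ * t) :=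
        mul_le_mul_of_nonneg_right hρge hexp.le
      have e2 : ρ t * (Real.exp (σ * t) * (ω * (T - t)))
          ≤ M * (Real.exp (σ * t) * (ω * (T - t))) :=
        mul_le_mul_of_nonneg_right hρle (by positivity)
      nlinarith
    simp only [hhdef, hgdef]
    calc ρ₀ * Real.exp (σ * t) - 2 * M / N * Real.exp (σ * (T + t) / 2)
        ≤ ρ₀ * Real.exp (σ * t) - M * (Real.exp (σ * t) * (ω * (T - t))) := by linarith
      _ ≤ ρ t * (Real.exp (σ * t) * (1 - ω * (T - t))) := step2
      _ ≤ ρ t * (Real.exp (σ * t) * Real.cos (ω * (T - t))) := step1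
  -- integral comparison
  have hIK : (∫ t in (0:ℝ)..T, Real.exp (σ * (T + t) / 2))
      ≤ 2 * ∫ t in (0:ℝ)..T, f t := by
    have hsub : (∫ t in (0:ℝ)..T, Real.exp (σ * (T + t) / 2))
        = 2 * ∫ u in (T/2:ℝ)..T, Real.exp (σ * u) := by
      have heq : (fun t : ℝ => Real.exp (σ * (T + t) / 2))
          = fun t : ℝ => (fun u => Real.exp (σ * u)) ((1/2) * t + T/2) := by
        funext t; ring_nf
      rw [heq, intervalIntegral.integral_comp_mul_add (fun u => Real.exp (σ * u))
        (by norm_num : (1/2:ℝ) ≠ 0) (T/2)]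
      norm_num
      congr 1
      ring
    rw [hsub]
    have hadd : (∫ u in (0:ℝ)..(T/2), Real.exp (σ * u))
        + (∫ u in (T/2:ℝ)..T, Real.exp (σ * u)) = ∫ u in (0:ℝ)..T, Real.exp (σ * u) :=
      intervalIntegral.integral_add_adjacent_intervals
        (hcf.intervalIntegrable 0 (T/2)) (hcf.intervalIntegrable (T/2) T)
    have hnn : 0 ≤ ∫ u in (0:ℝ)..(T/2), Real.exp (σ * u) :=
      intervalIntegral.integral_nonneg (by linarith) (fun u _ => (Real.exp_pos _).le)
    have : (∫ u in (T/2:ℝ)..T, Real.exp (σ * u)) ≤ ∫ u in (0:ℝ)..T, Real.exp (σ * u) := by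
      linarith
    simp only [hfdef]
    linarith
  have hI0 : 0 ≤ ∫ t in (0:ℝ)..T, f t :=
    intervalIntegral.integral_nonneg hT.le (fun u _ => (Real.exp_pos _).le)
  have hmono : (∫ t in (0:ℝ)..T, h t) ≤ ∫ t in (0:ℝ)..T, g t :=
    intervalIntegral.integral_mono_on hT.le hinth hintg hpt
  have hsplit : (∫ t in (0:ℝ)..T, h t)
      = ρ₀ * (∫ t in (0:ℝ)..T, f t)
        - 2 * M / N * ∫ t in (0:ℝ)..T, Real.exp (σ * (T + t) / 2) := by
    simp only [hhdef, hfdef]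
    rw [intervalIntegral.integral_sub (hintf.const_mul ρ₀) (hintK.const_mul (2 * M / N)),
      intervalIntegral.integral_const_mul, intervalIntegral.integral_const_mul]
  have hlow : ρ₀ / 2 * (∫ t in (0:ℝ)..T, f t) ≤ ∫ t in (0:ℝ)..T, g t := by
    have hc : 2 * M / N * (∫ t in (0:ℝ)..T, Real.exp (σ * (T + t) / 2))
        ≤ 2 * M / N * (2 * ∫ t in (0:ℝ)..T, f t) :=
      mul_le_mul_of_nonneg_left hIK (by positivity)
    have hNρ : 4 * M / N ≤ ρ₀ / 2 := by
      rw [div_le_div_iff₀ hN0 two_pos]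
      have : 8 * M ≤ N * ρ₀ := (div_le_iff₀ hρ₀).mp hNM
      linarith
    have h4 : 2 * M / N * (2 * ∫ t in (0:ℝ)..T, f t)
        = 4 * M / N * ∫ t in (0:ℝ)..T, f t := by ring
    have h5 : 4 * M / N * (∫ t in (0:ℝ)..T, f t) ≤ ρ₀ / 2 * ∫ t in (0:ℝ)..T, f t :=
      mul_le_mul_of_nonneg_right hNρ hI0
    rw [hsplit] at hmono
    rw [h4] at hc
    linarith
  -- complex part
  set F : ℂ := ∫ t in (0:ℝ)..T, (ρ t : ℂ) * Complex.exp (-s * t) with hFdef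
  set w : ℂ := Complex.exp (ω * T * Complex.I) with hwdef
  have hintF : IntervalIntegrable (fun t : ℝ => (ρ t : ℂ) * Complex.exp (-s * t))
      MeasureTheory.volume 0 T := by
    apply ContinuousOn.intervalIntegrable
    rw [Set.uIcc_of_le hT.le]
    exact (Complex.continuous_ofReal.comp_continuousOn hρc).mul
      (Continuous.continuousOn (by fun_prop))
  have hw1 : ‖w‖ = 1 := by
    simp [hwdef, Complex.norm_exp]
  have hptc : ∀ t : ℝ, (w * ((ρ t : ℂ) * Complex.exp (-s * t))).re = g t := by
    intro t
    have hz : w * ((ρ t : ℂ) * Complex.exp (-s * t))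
        = (ρ t : ℂ) * Complex.exp (-s * t + ω * T * Complex.I) := by
      rw [Complex.exp_add]; ring
    rw [hz, Complex.re_ofReal_mul, Complex.exp_re]
    have hre2 : (-s * (t:ℂ) + ω * T * Complex.I).re = σ * t := by
      simp [hσdef, Complex.mul_re]
    have him2 : (-s * (t:ℂ) + ω * T * Complex.I).im = ω * (T - t) := by
      simp [hωdef, Complex.mul_im]
      ring
    rw [hre2, him2]
  have hre_int : (w * F).re = ∫ t in (0:ℝ)..T, g t := by
    rw [hFdef, ← intervalIntegral.integral_const_mul]
    have := (Complex.reCLM.intervalIntegral_comp_comm (hintF.const_mul w)).symm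
    simp only [Complex.reCLM_apply] at this
    rw [this]
    exact intervalIntegral.integral_congr (fun t _ => hptc t)
  have habs : (w * F).re ≤ ‖F‖ := by
    calc (w * F).re ≤ ‖w * F‖ := Complex.re_le_norm _
      _ = ‖F‖ := by rw [norm_mul, hw1, one_mul]
  -- put everything together
  have hrw : (∫ t in (0:ℝ)..T, Real.exp (-t * s.re)) = ∫ t in (0:ℝ)..T, f t := by
    apply intervalIntegral.integral_congr
    intro t _
    simp only [hfdef, hσdef]
    ring_nf
  rw [hrw]
  calc ρ₀ / 2 * (∫ t in (0:ℝ)..T, f t) ≤ ∫ t in (0:ℝ)..T, g t := hlow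
    _ = (w * F).re := hre_int.symm
    _ ≤ ‖F‖ := habs
end

section
/- There exist constants C > 0 and K > 0 and N₀ > 1 such that for every fixed N ≥ N₀ and every s ∈ ℂ satisfying |s| > K, Re s ≤ 0, Im s ≥ 0 and N·Im s + Re s ≤ 0, one has |∫₀ᵀ ρ(t) e^{-st} dt| ≥ C e^{T|Re s|} / |s|. -/
lemma aux_integral_exp_mul {r a b : ℝ} (hr : r ≠ 0) :
    ∫ x in a..b, Real.exp (r * x) = (Real.exp (r * b) - Real.exp (r * a)) / r := by
  have D : ∀ x : ℝ, HasDerivAt (fun y => Real.exp (r * y) / r) (Real.exp (r * x)) x := by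
    intro x
    have h1 : HasDerivAt (fun y : ℝ => Real.exp (r * y)) (Real.exp (r * x) * r) x := by
      simpa [Function.comp_def] using (Real.hasDerivAt_exp (r * x)).comp x ((hasDerivAt_id x).const_mul r)
    simpa [mul_div_cancel_right₀ _ hr] using h1.div_const r
  rw [intervalIntegral.integral_eq_sub_of_hasDerivAt (fun x _ => D x)
    ((Real.continuous_exp.comp (continuous_const.mul continuous_id)).intervalIntegrable a b)]
  ring

/-- There exist constants `C > 0`, `K > 0` and `N₀ > 1` such that for every fixed
`N ≥ N₀` and every `s ∈ ℂ` satisfying `|s| > K`, `Re s ≤ 0`, `Im s ≥ 0` and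
`N·Im s + Re s ≤ 0`, one has `|∫₀ᵀ ρ(t) e^{-st} dt| ≥ C e^{T|Re s|} / |s|`. -/
theorem stmt8 (T : ℝ) (hT : 0 < T) (ρ ρ' : ℝ → ℝ)
    (hρ : ∀ t ∈ Set.Icc 0 T, HasDerivAt ρ (ρ' t) t)
    (hρ' : ContinuousOn ρ' (Set.Icc 0 T))
    (hpos : ∀ t ∈ Set.Icc 0 T, 0 < ρ t) :
    ∃ C > 0, ∃ K > 0, ∃ N₀ : ℝ, 1 < N₀ ∧ ∀ N ≥ N₀, ∀ s : ℂ,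
      K < ‖s‖ → s.re ≤ 0 → 0 ≤ s.im → N * s.im + s.re ≤ 0 →
      C * Real.exp (T * |s.re|) / ‖s‖ ≤
        ‖∫ t in (0:ℝ)..T, (ρ t : ℂ) * Complex.exp (-s * t)‖ := by
  obtain ⟨M, hM⟩ := isCompact_Icc.exists_bound_of_continuousOn hρ'
  have hM0 : 0 ≤ M := (norm_nonneg _).trans (hM 0 ⟨le_rfl, hT.le⟩)
  have hρT : 0 < ρ T := hpos T ⟨hT.le, le_rfl⟩
  have hρ0 : 0 < ρ 0 := hpos 0 ⟨le_rfl, hT.le⟩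
  set r₀ : ℝ := max (4 * M / ρ T) (max ((1 / T) * Real.log (4 * ρ 0 / ρ T)) 1) with hr₀def
  have hr₀1 : (1 : ℝ) ≤ r₀ := le_max_of_le_right (le_max_right _ _)
  refine ⟨ρ T / 2, by positivity, Real.sqrt 2 * (r₀ + 1),
    mul_pos (Real.sqrt_pos.mpr two_pos) (by linarith), 2, one_lt_two, ?_⟩
  intro N hN s hK hre him hNim
  set r : ℝ := -s.re with hrdef
  have him' : s.im ≤ r := by nlinarith
  have hrnn : 0 ≤ r := him.trans him'
  have hsq : ‖s‖ ^ 2 ≤ (Real.sqrt 2 * r) ^ 2 := by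
    rw [mul_pow, Real.sq_sqrt (by norm_num : (0:ℝ) ≤ 2), Complex.sq_norm, Complex.normSq_apply]
    nlinarith
  have habs_le : ‖s‖ ≤ Real.sqrt 2 * r := by
    nlinarith [norm_nonneg s, mul_nonneg (Real.sqrt_nonneg 2) hrnn]
  have hr_big : r₀ + 1 < r := by
    have h2 : Real.sqrt 2 * (r₀ + 1) < Real.sqrt 2 * r := lt_of_lt_of_le hK habs_le
    exact lt_of_mul_lt_mul_left h2 (Real.sqrt_nonneg 2)
  have hr_pos : 0 < r := by linarith
  have hspos : 0 < ‖s‖ :=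
    lt_trans (mul_pos (Real.sqrt_pos.mpr two_pos) (by linarith)) hK
  have hs0 : s ≠ 0 := by
    intro h; rw [h] at hspos; simp at hspos
  set c : ℂ := -s with hcdef
  have hc : c ≠ 0 := neg_ne_zero.mpr hs0
  have hcre : c.re = r := by simp [hcdef, hrdef]
  -- key size facts
  have key1 : M ≤ r * (ρ T / 4) := by
    have h1 : 4 * M / ρ T < r := lt_of_le_of_lt (le_max_left _ _) (by linarith)
    rw [div_lt_iff₀ hρT] at h1
    nlinarith
  have key2 : ρ 0 ≤ ρ T / 4 * Real.exp (r * T) := by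
    have h1 : (1 / T) * Real.log (4 * ρ 0 / ρ T) < r :=
      lt_of_le_of_lt (le_max_of_le_right (le_max_left _ _)) (by linarith)
    have h2 : Real.log (4 * ρ 0 / ρ T) ≤ r * T := by
      rw [div_mul_eq_mul_div, div_lt_iff₀ hT] at h1; nlinarith
    have h3 : 4 * ρ 0 / ρ T ≤ Real.exp (r * T) := by
      calc 4 * ρ 0 / ρ T = Real.exp (Real.log (4 * ρ 0 / ρ T)) :=
            (Real.exp_log (by positivity)).symm
        _ ≤ Real.exp (r * T) := Real.exp_le_exp.mpr h2
    rw [div_le_iff₀ hρT] at h3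
    nlinarith
  -- derivative of exp(c t)/c
  have hder_v : ∀ x : ℝ, HasDerivAt (fun y : ℝ => Complex.exp (c * y) / c)
      (Complex.exp (c * x)) x := by
    intro x
    have h1 : HasDerivAt (fun y : ℝ => Complex.exp (c * y)) (Complex.exp (c * x) * c) x := by
      have h0 : HasDerivAt (fun y : ℂ => Complex.exp (c * y)) (Complex.exp (c * x) * c)
          (x : ℂ) := by
        simpa [Function.comp_def] using (Complex.hasDerivAt_exp (c * x)).comp (x : ℂ)
          ((hasDerivAt_id (x : ℂ)).const_mul c)
      exact h0.comp_ofReal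
    simpa [mul_div_cancel_right₀ _ hc] using h1.div_const c
  have huIcc : Set.uIcc (0 : ℝ) T = Set.Icc 0 T := Set.uIcc_of_le hT.le
  have hint_ρ' : IntervalIntegrable (fun t : ℝ => (ρ' t : ℂ)) MeasureTheory.volume 0 T := by
    apply ContinuousOn.intervalIntegrable
    rw [huIcc]
    exact Complex.continuous_ofReal.comp_continuousOn hρ'
  have hint_exp : IntervalIntegrable (fun t : ℝ => Complex.exp (c * t))
      MeasureTheory.volume 0 T :=
    (Complex.continuous_exp.comp (continuous_const.mul Complex.continuous_ofReal)).intervalIntegrable 0 T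
  have hparts := intervalIntegral.integral_mul_deriv_eq_deriv_mul
    (u := fun t : ℝ => (ρ t : ℂ)) (u' := fun t : ℝ => (ρ' t : ℂ))
    (v := fun t : ℝ => Complex.exp (c * t) / c) (v' := fun t : ℝ => Complex.exp (c * t))
    (fun x hx => (hρ x (huIcc ▸ hx)).ofReal_comp)
    (fun x _ => hder_v x) hint_ρ' hint_exp
  set I : ℂ := ∫ t in (0:ℝ)..T, (ρ t : ℂ) * Complex.exp (c * t) with hIdef
  set J : ℂ := ∫ t in (0:ℝ)..T, (ρ' t : ℂ) * Complex.exp (c * t) with hJdef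
  have hdivJ : (∫ t in (0:ℝ)..T, (ρ' t : ℂ) * (Complex.exp (c * t) / c)) = J / c := by
    rw [hJdef, ← intervalIntegral.integral_div]
    congr 1; ext t; ring
  rw [hdivJ] at hparts
  have hcI : c * I = (ρ T : ℂ) * Complex.exp (c * T) - ρ 0 - J := by
    rw [hparts]
    field_simp
    simp
  -- bound |J|
  have hexp_norm : ∀ t : ℝ, ‖Complex.exp (c * t)‖ = Real.exp (r * t) := by
    intro t
    rw [Complex.norm_exp]
    congr 1
    simp [Complex.mul_re, hcre]
  have hcontmul : ContinuousOn (fun t : ℝ => ‖(ρ' t : ℂ) * Complex.exp (c * t)‖)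
      (Set.Icc 0 T) :=
    ((Complex.continuous_ofReal.comp_continuousOn hρ').mul
      ((Complex.continuous_exp.comp
        (continuous_const.mul Complex.continuous_ofReal)).continuousOn)).norm
  have hJbound : ‖J‖ ≤ M * ((Real.exp (r * T) - 1) / r) := by
    have h1 : ‖J‖ ≤ ∫ t in (0:ℝ)..T, ‖(ρ' t : ℂ) * Complex.exp (c * t)‖ :=
      intervalIntegral.norm_integral_le_integral_norm hT.le
    have h2 : (∫ t in (0:ℝ)..T, ‖(ρ' t : ℂ) * Complex.exp (c * t)‖) ≤
        ∫ t in (0:ℝ)..T, M * Real.exp (r * t) := by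
      apply intervalIntegral.integral_mono_on hT.le
      · exact ContinuousOn.intervalIntegrable (by rwa [huIcc])
      · exact ((continuous_const.mul (Real.continuous_exp.comp (continuous_const.mul continuous_id))).intervalIntegrable 0 T)
      · intro t ht
        have e2 : ‖Complex.exp (c * t)‖ = Real.exp (r * t) := by
          exact hexp_norm t
        rw [norm_mul, Complex.norm_real, e2]
        exact mul_le_mul_of_nonneg_right (hM t ht) (Real.exp_pos _).le
    have h3 : (∫ t in (0:ℝ)..T, M * Real.exp (r * t)) = M * ((Real.exp (r * T) - 1) / r) := by
      rw [intervalIntegral.integral_const_mul, aux_integral_exp_mul hr_pos.ne']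
      simp
    calc ‖J‖ ≤ _ := h1
      _ ≤ _ := h2
      _ = _ := h3
  have hJ2 : ‖J‖ ≤ ρ T / 4 * Real.exp (r * T) := by
    refine hJbound.trans ?_
    rw [← mul_div_assoc, div_le_iff₀ hr_pos]
    nlinarith [key1, hM0, Real.one_le_exp (mul_nonneg hrnn hT.le), hr_pos, hρT]
  -- lower bound for |c * I|
  have habsT : ‖(ρ T : ℂ) * Complex.exp (c * T)‖ = ρ T * Real.exp (r * T) := by
    rw [norm_mul, Complex.norm_real, hexp_norm T, Real.norm_eq_abs, abs_of_pos hρT]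
  have hlow : ρ T / 2 * Real.exp (r * T) ≤ ‖s‖ * ‖I‖ := by
    have h4 : ‖s‖ * ‖I‖ = ‖c * I‖ := by
      rw [norm_mul]; simp [hcdef]
    rw [h4, hcI]
    have t1 : ‖(ρ T : ℂ) * Complex.exp (c * T)‖ - ‖(ρ 0 : ℂ)‖
        ≤ ‖(ρ T : ℂ) * Complex.exp (c * T) - (ρ 0 : ℂ)‖ := by
      simpa using
        norm_sub_norm_le ((ρ T : ℂ) * Complex.exp (c * T)) ((ρ 0 : ℂ))
    have t2 : ‖(ρ T : ℂ) * Complex.exp (c * T) - (ρ 0 : ℂ)‖ - ‖J‖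
        ≤ ‖(ρ T : ℂ) * Complex.exp (c * T) - (ρ 0 : ℂ) - J‖ := by
      simpa using
        norm_sub_norm_le ((ρ T : ℂ) * Complex.exp (c * T) - (ρ 0 : ℂ)) J
    have habs0 : ‖(ρ 0 : ℂ)‖ = ρ 0 := by
      rw [Complex.norm_real, Real.norm_eq_abs, abs_of_pos hρ0]
    linarith [t1, t2, hJ2, key2, habsT, habs0]
  -- conclude
  have hre_abs : |s.re| = r := by rw [abs_of_nonpos hre]
  have hgoal_exp : Real.exp (T * |s.re|) = Real.exp (r * T) := by
    rw [hre_abs, mul_comm]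
  rw [hgoal_exp, div_le_iff₀ hspos]
  calc ρ T / 2 * Real.exp (r * T) ≤ ‖s‖ * ‖I‖ := hlow
    _ = ‖I‖ * ‖s‖ := mul_comm _ _
end

section
/- Suppose ρ(t) ≥ ρ₀ > 0 for all t ∈ [0,T]. Then for every s ∈ ℂ with Re s ≤ 0 and T·|Im s| ≤ 1/4, one has |∫₀ᵀ ρ(t) e^{-st} dt| ≥ (ρ₀/4) ∫₀ᵀ e^{-t·Re s} dt. -/
/-- Suppose `ρ(t) ≥ ρ₀ > 0` for all `t ∈ [0,T]`. Then for every `s ∈ ℂ` with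
`Re s ≤ 0` and `T·|Im s| ≤ 1/4`, one has
`|∫₀ᵀ ρ(t) e^{-st} dt| ≥ (ρ₀/4) ∫₀ᵀ e^{-t·Re s} dt`. -/
theorem stmt9 (T : ℝ) (hT : 0 < T) (ρ₀ : ℝ) (hρ₀ : 0 < ρ₀) (ρ : ℝ → ℝ)
    (hρ : ContinuousOn ρ (Set.Icc 0 T))
    (hlb : ∀ t ∈ Set.Icc 0 T, ρ₀ ≤ ρ t)
    (s : ℂ) (hre : s.re ≤ 0) (him : T * |s.im| ≤ 1 / 4) :
    ρ₀ / 4 * ∫ t in (0:ℝ)..T, Real.exp (-t * s.re) ≤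
      ‖∫ t in (0:ℝ)..T, (ρ t : ℂ) * Complex.exp (-s * t)‖ := by
  have huIcc : Set.uIcc (0:ℝ) T = Set.Icc 0 T := Set.uIcc_of_le hT.le
  have hcont : ContinuousOn (fun t : ℝ => (ρ t : ℂ) * Complex.exp (-s * t))
      (Set.Icc 0 T) := by
    exact (Complex.continuous_ofReal.comp_continuousOn hρ).mul
      ((Complex.continuous_exp.comp
        (continuous_const.mul Complex.continuous_ofReal)).continuousOn)
  have hint : IntervalIntegrable (fun t : ℝ => (ρ t : ℂ) * Complex.exp (-s * t))
      MeasureTheory.volume 0 T := by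
    apply ContinuousOn.intervalIntegrable
    rw [huIcc]; exact hcont
  -- real part of the integrand
  have hre_eq : ∀ t : ℝ, ((ρ t : ℂ) * Complex.exp (-s * t)).re
      = ρ t * (Real.exp (-t * s.re) * Real.cos (t * s.im)) := by
    intro t
    have : (-s * (t : ℂ)).re = -t * s.re := by simp [mul_comm]
    have him' : (-s * (t : ℂ)).im = -(t * s.im) := by simp [mul_comm]
    rw [Complex.mul_re, Complex.exp_re, Complex.exp_im, this, him']
    simp only [Real.cos_neg, Real.sin_neg, Complex.ofReal_re, Complex.ofReal_im, neg_mul,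
      mul_zero, zero_mul, sub_zero, mul_neg, neg_neg]
    ring
  -- compute the real part of the integral
  have hre_int : (∫ t in (0:ℝ)..T, (ρ t : ℂ) * Complex.exp (-s * t)).re
      = ∫ t in (0:ℝ)..T, ρ t * (Real.exp (-t * s.re) * Real.cos (t * s.im)) := by
    rw [intervalIntegral.integral_of_le hT.le, intervalIntegral.integral_of_le hT.le]
    have := (Complex.reCLM.integral_comp_comm hint.1).symm
    simp only [Complex.reCLM_apply] at this
    rw [this]
    exact MeasureTheory.integral_congr_ae (Filter.Eventually.of_forall fun t => hre_eq t)
  -- pointwise lower bound on the real part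
  have hpt : ∀ t ∈ Set.Icc (0:ℝ) T,
      ρ₀ / 4 * Real.exp (-t * s.re)
        ≤ ρ t * (Real.exp (-t * s.re) * Real.cos (t * s.im)) := by
    intro t ht
    obtain ⟨ht0, htT⟩ := ht
    have habs : |t * s.im| ≤ 1 / 4 := by
      rw [abs_mul, abs_of_nonneg ht0]
      calc t * |s.im| ≤ T * |s.im| := by
            have := abs_nonneg s.im; nlinarith
        _ ≤ 1 / 4 := him
    have hcos : (1:ℝ) / 4 ≤ Real.cos (t * s.im) := by
      have h1 := Real.one_sub_sq_div_two_le_cos (x := t * s.im)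
      have h2 : (t * s.im) ^ 2 ≤ (1/4 : ℝ) ^ 2 := by
        have := sq_abs (t * s.im)
        nlinarith [abs_nonneg (t * s.im)]
      nlinarith
    have hρt := hlb t ⟨ht0, htT⟩
    have hexp : 0 < Real.exp (-t * s.re) := Real.exp_pos _
    have h0 : (0:ℝ) ≤ ρ t * Real.exp (-t * s.re) :=
      mul_nonneg (le_trans hρ₀.le hρt) hexp.le
    have key : ρ₀ * Real.exp (-t * s.re) * (1 / 4)
        ≤ ρ t * Real.exp (-t * s.re) * Real.cos (t * s.im) :=
      mul_le_mul (mul_le_mul_of_nonneg_right hρt hexp.le) hcos (by norm_num) h0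
    nlinarith [key]
  -- integrability of the comparison functions
  have hint1 : IntervalIntegrable (fun t : ℝ => ρ₀ / 4 * Real.exp (-t * s.re))
      MeasureTheory.volume 0 T := by
    exact (continuous_const.mul
      (Real.continuous_exp.comp (continuous_neg.mul continuous_const))).intervalIntegrable _ _
  have hint2 : IntervalIntegrable
      (fun t : ℝ => ρ t * (Real.exp (-t * s.re) * Real.cos (t * s.im)))
      MeasureTheory.volume 0 T := by
    apply ContinuousOn.intervalIntegrable
    rw [huIcc]
    exact hρ.mul (Continuous.continuousOn
      ((Real.continuous_exp.comp (continuous_neg.mul continuous_const)).mul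
        (Real.continuous_cos.comp (continuous_id.mul continuous_const))))
  have hmono := intervalIntegral.integral_mono_on hT.le hint1 hint2 hpt
  rw [intervalIntegral.integral_const_mul] at hmono
  calc ρ₀ / 4 * ∫ t in (0:ℝ)..T, Real.exp (-t * s.re)
      ≤ (∫ t in (0:ℝ)..T, (ρ t : ℂ) * Complex.exp (-s * t)).re := by
        rw [hre_int]; exact hmono
    _ ≤ ‖∫ t in (0:ℝ)..T, (ρ t : ℂ) * Complex.exp (-s * t)‖ :=
        Complex.re_le_norm _
end

section
/- Let ρ : [0,T] → ℝ be continuously differentiable with ρ(t) > 0 on [0,T], and define ρ̂(s) = ∫₀ᵀ ρ(t)e^{-st} dt for s ∈ ℂ. Let g : ℂ → ℂ be an entire function such that |g(s)| ≤ C|ρ̂(s)| for all s ∈ ℂ and some constant C > 0, and suppose s·g(s) → 0 as s → +∞ along the real axis. Then g(s) = 0 for all s ∈ ℂ. -/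
open Filter Set MeasureTheory intervalIntegral Metric
open scoped Topology

/-- The Laplace-type transform `s ↦ ∫₀ᵀ ρ(t) e^{-st} dt` is entire when `ρ` is continuous. -/
lemma stmt16_entire (T : ℝ) (hT : 0 < T) (ρ : ℝ → ℝ) (hρc : ContinuousOn ρ (Set.Icc 0 T)) :
    Differentiable ℂ (fun s : ℂ => ∫ t in (0:ℝ)..T, (ρ t : ℂ) * Complex.exp (-s * t)) := by
  intro s₀
  obtain ⟨M, hM⟩ : ∃ M, ∀ t ∈ Set.Icc 0 T, |ρ t| ≤ M := by
    obtain ⟨M, hM⟩ := (isCompact_Icc.image_of_continuousOn hρc.abs).bddAbove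
    exact ⟨M, fun t ht => hM ⟨t, ht, rfl⟩⟩
  have hM0 : 0 ≤ M := le_trans (abs_nonneg _) (hM 0 ⟨le_rfl, hT.le⟩)
  set B : ℝ := M * T * Real.exp ((|s₀.re| + 1) * T) with hB
  have hB0 : 0 ≤ B := by positivity
  have huIcc : Set.uIcc (0:ℝ) T = Set.Icc 0 T := Set.uIcc_of_le hT.le
  have hcont : ∀ s : ℂ, ContinuousOn (fun t : ℝ => (ρ t : ℂ) * Complex.exp (-s * t))
      (Set.Icc 0 T) := fun s => (Complex.continuous_ofReal.comp_continuousOn hρc).mul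
    (Continuous.continuousOn (by continuity))
  have key := intervalIntegral.hasDerivAt_integral_of_dominated_loc_of_lip
    (F := fun (s : ℂ) (t : ℝ) => (ρ t : ℂ) * Complex.exp (-s * t))
    (F' := fun t : ℝ => (ρ t : ℂ) * (-(t:ℂ) * Complex.exp (-s₀ * t)))
    (μ := volume) (a := 0) (b := T) (x₀ := s₀) (bound := fun _ => B)
    (ball_mem_nhds s₀ one_pos)
    (Eventually.of_forall fun s => (((hcont s).mono ?_).aestronglyMeasurable measurableSet_Ioc))
    (((hcont s₀).mono huIcc.subset).intervalIntegrable)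
    ?_ ?_ intervalIntegrable_const ?_
  · exact key.2.differentiableAt
  · rw [Set.uIoc_of_le hT.le]; exact Set.Ioc_subset_Icc_self
  · apply ContinuousOn.aestronglyMeasurable _ measurableSet_Ioc
    apply ContinuousOn.mono _ (Set.uIoc_of_le hT.le ▸ Set.Ioc_subset_Icc_self)
    exact ((Complex.continuous_ofReal.comp_continuousOn hρc).mul
      (Continuous.continuousOn (by continuity)))
  · -- Lipschitz bound
    refine Eventually.of_forall fun t ht => ?_
    rw [Set.uIoc_of_le hT.le] at ht
    have ht' : t ∈ Set.Icc 0 T := Set.Ioc_subset_Icc_self ht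
    have hderiv : ∀ s ∈ ball s₀ 1, HasDerivWithinAt (fun s : ℂ => (ρ t : ℂ) * Complex.exp (-s * t))
        ((ρ t : ℂ) * (-(t:ℂ) * Complex.exp (-s * t))) (ball s₀ 1) s := by
      intro s hs
      have h1 : HasDerivAt (fun s : ℂ => -s * (t:ℂ)) (-(t:ℂ)) s := by
        simpa using ((hasDerivAt_id s).neg.mul_const (t:ℂ))
      have h2 : HasDerivAt (fun s : ℂ => Complex.exp (-s * t)) (Complex.exp (-s * t) * -(t:ℂ)) s :=
        h1.cexp
      simpa [mul_comm, mul_left_comm] using ((h2.const_mul ((ρ t : ℂ))).hasDerivWithinAt)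
    have hboundd : ∀ s ∈ ball s₀ 1, ‖(ρ t : ℂ) * (-(t:ℂ) * Complex.exp (-s * t))‖₊ ≤
        Real.nnabs B := by
      intro s hs
      rw [← NNReal.coe_le_coe]
      have hre : |s.re| ≤ |s₀.re| + 1 := by
        have := Complex.abs_re_le_norm (s - s₀)
        have hlt : ‖s - s₀‖ < 1 := by
          simpa [dist_eq_norm] using (mem_ball.mp hs)
        simp only [Complex.sub_re] at this
        cases abs_cases (s.re - s₀.re) <;> cases abs_cases s.re <;> cases abs_cases s₀.re <;>
          linarith
      have hexp : ‖Complex.exp (-s * t)‖ = Real.exp (-(s.re * t)) := by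
        rw [Complex.norm_exp]; norm_num [Complex.mul_re]
      have hexple : Real.exp (-(s.re * t)) ≤ Real.exp ((|s₀.re| + 1) * T) := by
        apply Real.exp_le_exp.2
        have h1 : -(s.re * t) ≤ |s.re| * t := by
          have := neg_abs_le s.re
          nlinarith [ht'.1, abs_nonneg s.re]
        have h2 : |s.re| * t ≤ (|s₀.re| + 1) * T := by
          nlinarith [ht'.1, ht'.2, abs_nonneg s₀.re]
        linarith
      have : ‖(ρ t : ℂ) * (-(t:ℂ) * Complex.exp (-s * t))‖ =
          |ρ t| * (|t| * ‖Complex.exp (-s * t)‖) := by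
        simp
      have habsB : (Real.nnabs B : ℝ) = B := by
        simp [Real.coe_nnabs, abs_of_nonneg hB0]
      rw [coe_nnnorm, habsB, this, hexp]
      have hρt : |ρ t| ≤ M := hM t ht'
      have htT : |t| ≤ T := by rw [abs_of_nonneg ht'.1]; exact ht'.2
      have hexppos : (0:ℝ) < Real.exp (-(s.re * t)) := Real.exp_pos _
      calc |ρ t| * (|t| * Real.exp (-(s.re * t)))
          = (|ρ t| * |t|) * Real.exp (-(s.re * t)) := by ring
        _ ≤ (M * T) * Real.exp ((|s₀.re| + 1) * T) :=
            mul_le_mul (mul_le_mul hρt htT (abs_nonneg t) hM0) hexple hexppos.le (by positivity)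
        _ = B := by rw [hB]
    refine (Convex.lipschitzOnWith_of_nnnorm_hasDerivWithin_le (convex_ball s₀ 1)
      hderiv hboundd)
  · refine Eventually.of_forall fun t ht => ?_
    have h1 : HasDerivAt (fun s : ℂ => -s * (t:ℂ)) (-(t:ℂ)) s₀ := by
      simpa using ((hasDerivAt_id s₀).neg.mul_const (t:ℂ))
    simpa [mul_comm, mul_left_comm] using (h1.cexp.const_mul ((ρ t : ℂ)))

lemma stmt16_real (T : ℝ) (ρ : ℝ → ℝ) (x : ℝ) :
    (∫ t in (0:ℝ)..T, (ρ t : ℂ) * Complex.exp (-(x:ℂ) * t)) =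
      ((∫ t in (0:ℝ)..T, ρ t * Real.exp (-x * t) : ℝ) : ℂ) := by
  rw [← intervalIntegral.integral_ofReal]
  apply intervalIntegral.integral_congr
  intro t ht
  push_cast [Complex.ofReal_exp]
  ring_nf

lemma stmt16_expint (T x : ℝ) (hx : 0 < x) :
    (∫ t in (0:ℝ)..T, Real.exp (-x * t)) = (1 - Real.exp (-x * T)) / x := by
  have hAnti : ∀ t ∈ Set.uIcc (0:ℝ) T, HasDerivAt (fun u : ℝ => -Real.exp (-x * u) / x)
      (Real.exp (-x * t)) t := by
    intro t _
    have h1 : HasDerivAt (fun u : ℝ => -x * u) (-x) t := by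
      simpa using (hasDerivAt_id t).const_mul (-x)
    have h2 := (h1.exp.neg).div_const x
    refine h2.congr_deriv ?_
    rw [div_eq_iff hx.ne']; ring
  rw [intervalIntegral.integral_eq_sub_of_hasDerivAt hAnti
    ((Continuous.intervalIntegrable (by continuity) 0 T))]
  simp [Real.exp_zero]
  ring

lemma stmt16_lb (T : ℝ) (hT : 0 < T) (ρ : ℝ → ℝ) (hρc : ContinuousOn ρ (Set.Icc 0 T))
    (m : ℝ) (hmle : ∀ t ∈ Set.Icc 0 T, m ≤ ρ t) (x : ℝ) (hx : 0 < x) :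
    m * ((1 - Real.exp (-x * T)) / x) ≤ ∫ t in (0:ℝ)..T, ρ t * Real.exp (-x * t) := by
  have huIcc : Set.uIcc (0:ℝ) T = Set.Icc 0 T := Set.uIcc_of_le hT.le
  have hint1 : IntervalIntegrable (fun t => m * Real.exp (-x * t)) volume 0 T :=
    Continuous.intervalIntegrable (by continuity) 0 T
  have hint2 : IntervalIntegrable (fun t => ρ t * Real.exp (-x * t)) volume 0 T := by
    apply ContinuousOn.intervalIntegrable
    rw [huIcc]
    exact hρc.mul (Continuous.continuousOn (by continuity))
  have h1 : (∫ t in (0:ℝ)..T, m * Real.exp (-x * t)) ≤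
      ∫ t in (0:ℝ)..T, ρ t * Real.exp (-x * t) :=
    intervalIntegral.integral_mono_on hT.le hint1 hint2
      (fun t ht => mul_le_mul_of_nonneg_right (hmle t ht) (Real.exp_pos _).le)
  calc m * ((1 - Real.exp (-x * T)) / x) = m * ∫ t in (0:ℝ)..T, Real.exp (-x * t) := by
        rw [stmt16_expint T x hx]
    _ = ∫ t in (0:ℝ)..T, m * Real.exp (-x * t) := by
        rw [intervalIntegral.integral_const_mul]
    _ ≤ _ := h1

noncomputable def stmt16Rho (T : ℝ) (ρ : ℝ → ℝ) : ℂ → ℂ :=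
  fun s => ∫ t in (0:ℝ)..T, (ρ t : ℂ) * Complex.exp (-s * t)

/-- Let `ρ : [0,T] → ℝ` be continuously differentiable with `ρ(t) > 0` on
`[0,T]`, and define `ρ̂(s) = ∫₀ᵀ ρ(t)e^{-st} dt` for `s ∈ ℂ`. Let `g : ℂ → ℂ` be an entire
function such that `|g(s)| ≤ C|ρ̂(s)|` for all `s ∈ ℂ` and some constant `C > 0`, and suppose
`s·g(s) → 0` as `s → +∞` along the real axis. Then `g(s) = 0` for all `s ∈ ℂ`. -/
theorem stmt16 (T : ℝ) (hT : 0 < T) (ρ ρ' : ℝ → ℝ)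
    (hρ : ∀ t ∈ Set.Icc 0 T, HasDerivAt ρ (ρ' t) t)
    (hρ' : ContinuousOn ρ' (Set.Icc 0 T))
    (hpos : ∀ t ∈ Set.Icc 0 T, 0 < ρ t)
    (g : ℂ → ℂ) (hg : Differentiable ℂ g)
    (C : ℝ) (hC : 0 < C)
    (hbound : ∀ s : ℂ, ‖g s‖ ≤
      C * ‖∫ t in (0:ℝ)..T, (ρ t : ℂ) * Complex.exp (-s * t)‖)
    (hdecay : Filter.Tendsto (fun x : ℝ => (x : ℂ) * g x) Filter.atTop (nhds 0)) :
    ∀ s : ℂ, g s = 0 := by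
  have hρc : ContinuousOn ρ (Set.Icc 0 T) := fun t ht =>
    ((hρ t ht).continuousAt).continuousWithinAt
  obtain ⟨t₀, ht₀, hmin'⟩ := isCompact_Icc.exists_isMinOn (Set.nonempty_Icc.2 hT.le) hρc
  have hmin : ∀ t ∈ Set.Icc 0 T, ρ t₀ ≤ ρ t := fun t ht => hmin' ht
  set m := ρ t₀ with hmdef
  have hm : 0 < m := hpos t₀ ht₀
  set ρh : ℂ → ℂ := stmt16Rho T ρ with hρhdef
  have hbound' : ∀ s : ℂ, ‖g s‖ ≤ C * ‖ρh s‖ := hbound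
  have hρh : Differentiable ℂ ρh := stmt16_entire T hT ρ hρc
  set c₀ : ℝ := m * (1 - Real.exp (-T)) with hc₀def
  have hexpT : Real.exp (-T) < 1 := by
    rw [Real.exp_lt_one_iff]; linarith
  have hc₀ : 0 < c₀ := by
    rw [hc₀def]; nlinarith
  have hval : ∀ x : ℝ, ρh x = ((∫ t in (0:ℝ)..T, ρ t * Real.exp (-x * t) : ℝ) : ℂ) :=
    fun x => stmt16_real T ρ x
  -- lower bound on the real axis
  have hρhne : ∀ x : ℝ, 1 ≤ x → ρh x ≠ 0 ∧ c₀ / x ≤ ‖ρh x‖ := by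
    intro x hx
    have hx0 : (0:ℝ) < x := one_pos.trans_le hx
    have h1 : m * ((1 - Real.exp (-x * T)) / x) ≤ ∫ t in (0:ℝ)..T, ρ t * Real.exp (-x * t) :=
      stmt16_lb T hT ρ hρc m (fun t ht => hmin t ht) x hx0
    have hexp' : Real.exp (-x * T) ≤ Real.exp (-T) := by
      apply Real.exp_le_exp.2; nlinarith
    have h2 : c₀ / x ≤ ∫ t in (0:ℝ)..T, ρ t * Real.exp (-x * t) := by
      refine le_trans ?_ h1
      rw [hc₀def, mul_div_assoc]
      gcongr
    have h3 : (0:ℝ) < ∫ t in (0:ℝ)..T, ρ t * Real.exp (-x * t) :=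
      lt_of_lt_of_le (by positivity) h2
    refine ⟨?_, ?_⟩
    · rw [hval x]
      exact_mod_cast h3.ne'
    · rw [hval x, Complex.norm_real, Real.norm_eq_abs, abs_of_pos h3]
      exact h2
  have hone : ρh 1 ≠ 0 := by
    have := (hρhne 1 le_rfl).1
    simpa using this
  -- zeros of ρh are isolated
  have hiso : ∀ s₀ : ℂ, ∀ᶠ z in 𝓝[≠] s₀, ρh z ≠ 0 := by
    intro s₀
    rcases (hρh.analyticAt s₀).eventually_eq_zero_or_eventually_ne_zero with hcase | hcase
    · exfalso
      apply hone
      have hA : AnalyticOnNhd ℂ ρh Set.univ := fun z _ => hρh.analyticAt z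
      exact hA.eqOn_zero_of_preconnected_of_eventuallyEq_zero isPreconnected_univ
        (Set.mem_univ s₀) hcase (Set.mem_univ 1)
    · exact hcase
  -- the quotient is bounded by C wherever defined
  set q : ℂ → ℂ := fun z => g z / ρh z with hqdef
  have hq : ∀ z, ρh z ≠ 0 → ‖q z‖ ≤ C := by
    intro z hz
    rw [hqdef]
    simp only [norm_div]
    rw [div_le_iff₀ (norm_pos_iff.mpr hz)]
    exact hbound' z
  set h : ℂ → ℂ := fun s => if ρh s = 0 then limUnder (𝓝[≠] s) q else q s with hhdef
  have hdiffh : Differentiable ℂ h := by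
    intro s₀
    by_cases h0 : ρh s₀ = 0
    · have hev := hiso s₀
      rw [eventually_nhdsWithin_iff] at hev
      obtain ⟨U, hU, hUo, hUs⟩ := _root_.eventually_nhds_iff.mp hev
      have hU' : ∀ z ∈ U \ {s₀}, ρh z ≠ 0 := fun z hz => hU z hz.1 hz.2
      have hFd : DifferentiableOn ℂ
          (Function.update q s₀ (limUnder (𝓝[≠] s₀) q)) U := by
        apply Complex.differentiableOn_update_limUnder_of_bddAbove (hUo.mem_nhds hUs)
        · intro z hz
          exact ((hg z).div (hρh z) (hU' z hz)).differentiableWithinAt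
        · refine ⟨C, ?_⟩
          rintro r ⟨z, hz, rfl⟩
          simpa using hq z (hU' z hz)
      have heq : h =ᶠ[𝓝 s₀] Function.update q s₀ (limUnder (𝓝[≠] s₀) q) := by
        filter_upwards [hUo.mem_nhds hUs] with z hz
        by_cases hzs : z = s₀
        · subst hzs
          simp [hhdef, if_pos h0, Function.update_self]
        · have hne : ρh z ≠ 0 := hU z hz hzs
          simp [hhdef, if_neg hne, Function.update_of_ne hzs]
      exact (hFd.differentiableAt (hUo.mem_nhds hUs)).congr_of_eventuallyEq heq
    · have hopen : IsOpen {z | ρh z ≠ 0} := isOpen_compl_singleton.preimage hρh.continuous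
      have heq : h =ᶠ[𝓝 s₀] q := by
        filter_upwards [hopen.mem_nhds h0] with z hz
        simp [hhdef, if_neg hz]
      exact (((hg s₀).div (hρh s₀) h0)).congr_of_eventuallyEq heq
  -- global bound on h
  have hbd : ∀ z, ‖h z‖ ≤ C := by
    intro z
    by_cases hz : ρh z = 0
    · have hcont : Tendsto h (𝓝[≠] z) (𝓝 (h z)) :=
        ((hdiffh z).continuousAt.continuousWithinAt)
      have hev : ∀ᶠ w in 𝓝[≠] z, ‖h w‖ ≤ C := by
        filter_upwards [hiso z] with w hw
        have : h w = q w := by simp [hhdef, if_neg hw]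
        rw [this]
        simpa using hq w hw
      exact le_of_tendsto (hcont.norm) hev
    · have : h z = q z := by simp [hhdef, if_neg hz]
      rw [this]
      simpa using hq z hz
  -- Liouville
  have hconst : ∀ z w : ℂ, h z = h w := by
    intro z w
    apply hdiffh.apply_eq_apply_of_bounded
    rw [isBounded_iff_forall_norm_le]
    exact ⟨C, by rintro r ⟨z, rfl⟩; exact hbd z⟩
  -- h tends to 0 along the real axis
  have htends : Tendsto (fun x : ℝ => h x) atTop (𝓝 0) := by
    apply squeeze_zero_norm' (a := fun x : ℝ => ‖(x : ℂ) * g x‖ * c₀⁻¹)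
    · filter_upwards [eventually_ge_atTop (1:ℝ)] with x hx
      have hx0 : (0:ℝ) < x := one_pos.trans_le hx
      obtain ⟨hne, hab⟩ := hρhne x hx
      have hh : h x = q x := by simp [hhdef, if_neg hne]
      have habpos : 0 < ‖ρh x‖ := lt_of_lt_of_le (by positivity) hab
      have hnorm : ‖(x : ℂ) * g x‖ = x * ‖g x‖ := by
        simp [abs_of_pos hx0]
      rw [hh, hnorm]
      have hqnorm : ‖q ↑x‖ = ‖g x‖ / ‖ρh x‖ := by
        simp [hqdef]
      rw [hqnorm]
      calc ‖g x‖ / ‖ρh x‖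
          ≤ ‖g x‖ / (c₀ / x) := by
            gcongr
        _ = x * ‖g x‖ * c₀⁻¹ := by
            field_simp
    · simpa using hdecay.norm.mul_const c₀⁻¹
  have hzero : ∀ s : ℂ, h s = 0 := by
    intro s
    have h1 : Tendsto (fun x : ℝ => h x) atTop (𝓝 (h s)) := by
      have : (fun x : ℝ => h x) = fun _ => h s := funext fun x => hconst _ _
      rw [this]
      exact tendsto_const_nhds
    exact tendsto_nhds_unique h1 htends
  -- conclude
  intro s
  by_cases hz : ρh s = 0
  · have hb := hbound' s
    rw [hz] at hb
    simp only [norm_zero, mul_zero] at hb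
    exact norm_eq_zero.mp (le_antisymm hb (norm_nonneg _))
  · have : q s = 0 := by
      have := hzero s
      rwa [show h s = q s by simp [hhdef, if_neg hz]] at this
    rw [hqdef] at this
    simp only [div_eq_zero_iff] at this
    exact this.resolve_right hz
end
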